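/- Let 0 < q < 1, a < b, and f : [a,b] → ℝ continuous and convex. Then f((aq+b)/(1+q)) ≤ (1/(b−a))·R_q(f;a,b) ≤ (1/(1+q))·(q·f(a) + f(b)). -/

import Mathlib

open scoped BigOperators
open Set

/-- A convex function on `Icc a b` has a supporting line at any interior point. -/
lemma exists_support_line {f : ℝ → ℝ} {a b m : ℝ} (hconv : ConvexOn ℝ (Set.Icc a b) f)
    (ham : a < m) (hmb : m < b) :
    ∃ c : ℝ, ∀ x ∈ Set.Icc a b, f m + c * (x - m) ≤ f x := by
  have hab := ham.trans hmb
  set S : Set ℝ := (fun x => (f m - f x) / (m - x)) '' Set.Ico a m with hS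
  have hSne : S.Nonempty := ⟨_, ⟨a, ⟨le_refl a, ham⟩, rfl⟩⟩
  have hbdd : BddAbove S := by
    refine ⟨(f b - f m) / (b - m), ?_⟩
    rintro r ⟨x, hx, rfl⟩
    exact hconv.slope_mono_adjacent ⟨hx.1, (hx.2.trans hmb).le⟩ ⟨hab.le, le_refl b⟩ hx.2 hmb
  refine ⟨sSup S, ?_⟩
  rintro x ⟨hx1, hx2⟩
  rcases lt_trichotomy x m with h | h | h
  · have hle : (f m - f x) / (m - x) ≤ sSup S := le_csSup hbdd ⟨x, ⟨hx1, h⟩, rfl⟩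
    have hmx : (0:ℝ) < m - x := by linarith
    rw [div_le_iff₀ hmx] at hle
    nlinarith
  · simp [h]
  · have hge : sSup S ≤ (f x - f m) / (x - m) := by
      apply csSup_le hSne
      rintro r ⟨y, hy, rfl⟩
      exact hconv.slope_mono_adjacent ⟨hy.1, (hy.2.trans hmb).le⟩ ⟨hx1, hx2⟩ hy.2 h
    have hxm : (0:ℝ) < x - m := by linarith
    rw [le_div_iff₀ hxm] at hge
    nlinarith

/-- q-Hermite–Hadamard inequality for the Riemann-type q-integral. -/
theorem q_hermite_hadamard_Rq (q a b : ℝ) (f : ℝ → ℝ)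
    (hq0 : 0 < q) (hq1 : q < 1) (hab : a < b)
    (hcont : ContinuousOn f (Icc a b)) (hconv : ConvexOn ℝ (Icc a b) f) :
    f ((a * q + b) / (1 + q)) ≤
        (1 / (b - a)) * ((b - a) * (1 - q) * ∑' k : ℕ, f (a + (b - a) * q ^ k) * q ^ k) ∧
      (1 / (b - a)) * ((b - a) * (1 - q) * ∑' k : ℕ, f (a + (b - a) * q ^ k) * q ^ k) ≤
        (1 / (1 + q)) * (q * f a + f b) := by
  have hba : (0:ℝ) < b - a := sub_pos.mpr hab
  have h1q : (0:ℝ) < 1 + q := by linarith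
  have h1q' : (0:ℝ) < 1 - q := by linarith
  have h1qq : (0:ℝ) < 1 - q * q := by nlinarith
  set m : ℝ := (a * q + b) / (1 + q) with hm
  have ham : a < m := by rw [hm, lt_div_iff₀ h1q]; nlinarith
  have hmb : m < b := by rw [hm, div_lt_iff₀ h1q]; nlinarith
  have hxk : ∀ k : ℕ, a + (b - a) * q ^ k ∈ Icc a b := by
    intro k
    constructor
    · nlinarith [pow_nonneg hq0.le k]
    · nlinarith [pow_le_one₀ hq0.le hq1.le (n := k)]
  have hgeo : Summable (fun k : ℕ => q ^ k) := summable_geometric_of_lt_one hq0.le hq1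
  have hgeo2 : Summable (fun k : ℕ => (q * q) ^ k) :=
    summable_geometric_of_lt_one (by positivity) (by nlinarith)
  obtain ⟨M, hM⟩ := isCompact_Icc.exists_bound_of_continuousOn hcont
  have hsf : Summable (fun k : ℕ => f (a + (b - a) * q ^ k) * q ^ k) := by
    apply Summable.of_abs
    apply Summable.of_nonneg_of_le (fun k => abs_nonneg _) (fun k => ?_) (hgeo.mul_left M)
    rw [abs_mul, abs_pow, abs_of_pos hq0]
    have := hM _ (hxk k)
    rw [Real.norm_eq_abs] at this
    exact mul_le_mul_of_nonneg_right this (pow_nonneg hq0.le k)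
  set T := ∑' k : ℕ, f (a + (b - a) * q ^ k) * q ^ k with hT
  have hred : (1 / (b - a)) * ((b - a) * (1 - q) * T) = (1 - q) * T := by
    field_simp
  constructor
  · -- left inequality
    obtain ⟨c, hc⟩ := exists_support_line hconv ham hmb
    have hle : ∀ k : ℕ,
        (f m + c * (a - m)) * q ^ k + (c * (b - a)) * (q * q) ^ k ≤
          f (a + (b - a) * q ^ k) * q ^ k := by
      intro k
      have h1 := hc _ (hxk k)
      have h2 : (f m + c * (a + (b - a) * q ^ k - m)) * q ^ k ≤
          f (a + (b - a) * q ^ k) * q ^ k :=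
        mul_le_mul_of_nonneg_right h1 (pow_nonneg hq0.le k)
      calc (f m + c * (a - m)) * q ^ k + (c * (b - a)) * (q * q) ^ k
          = (f m + c * (a + (b - a) * q ^ k - m)) * q ^ k := by rw [mul_pow]; ring
        _ ≤ _ := h2
    have hTle := Summable.tsum_le_tsum hle ((hgeo.mul_left _).add (hgeo2.mul_left _)) hsf
    rw [Summable.tsum_add (hgeo.mul_left _) (hgeo2.mul_left _), tsum_mul_left, tsum_mul_left,
      tsum_geometric_of_lt_one hq0.le hq1,
      tsum_geometric_of_lt_one (by positivity) (by nlinarith)] at hTle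
    rw [hred]
    have hkey : (1 - q) * ((f m + c * (a - m)) * (1 - q)⁻¹ + (c * (b - a)) * (1 - q * q)⁻¹)
        = f m := by
      rw [hm]; field_simp [h1q'.ne', h1qq.ne', h1q.ne', (by nlinarith : (0:ℝ) < 1 - q ^ 2).ne']; ring
    calc f m = (1 - q) * ((f m + c * (a - m)) * (1 - q)⁻¹ + (c * (b - a)) * (1 - q * q)⁻¹) :=
          hkey.symm
      _ ≤ (1 - q) * T := mul_le_mul_of_nonneg_left hTle h1q'.le
  · -- right inequality
    have hle2 : ∀ k : ℕ, f (a + (b - a) * q ^ k) * q ^ k ≤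
        (f a) * q ^ k + (f b - f a) * (q * q) ^ k := by
      intro k
      have hqk0 : (0:ℝ) ≤ q ^ k := pow_nonneg hq0.le k
      have hqk1 : q ^ k ≤ 1 := pow_le_one₀ hq0.le hq1.le (n := k)
      have hcv := hconv.2 (left_mem_Icc.mpr hab.le) (right_mem_Icc.mpr hab.le)
        (by linarith : (0:ℝ) ≤ 1 - q ^ k) hqk0 (by ring)
      simp only [smul_eq_mul] at hcv
      have heq : (1 - q ^ k) * a + q ^ k * b = a + (b - a) * q ^ k := by ring
      rw [heq] at hcv
      calc f (a + (b - a) * q ^ k) * q ^ k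
          ≤ ((1 - q ^ k) * f a + q ^ k * f b) * q ^ k :=
            mul_le_mul_of_nonneg_right hcv hqk0
        _ = (f a) * q ^ k + (f b - f a) * (q * q) ^ k := by rw [mul_pow]; ring
    have hTge := Summable.tsum_le_tsum hle2 hsf ((hgeo.mul_left _).add (hgeo2.mul_left _))
    rw [Summable.tsum_add (hgeo.mul_left _) (hgeo2.mul_left _), tsum_mul_left, tsum_mul_left,
      tsum_geometric_of_lt_one hq0.le hq1,
      tsum_geometric_of_lt_one (by positivity) (by nlinarith)] at hTge
    rw [hred]
    have hkey2 : (1 - q) * ((f a) * (1 - q)⁻¹ + (f b - f a) * (1 - q * q)⁻¹)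
        = (1 / (1 + q)) * (q * f a + f b) := by
      field_simp [h1q'.ne', h1qq.ne', h1q.ne', (by nlinarith : (0:ℝ) < 1 - q ^ 2).ne']; ring
    calc (1 - q) * T ≤ (1 - q) * ((f a) * (1 - q)⁻¹ + (f b - f a) * (1 - q * q)⁻¹) :=
          mul_le_mul_of_nonneg_left hTge h1q'.le
      _ = _ := hkey2
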